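/- The dual of the X-SAGE cone satisfies C_X(𝒜)* = cl{ exp(y) : y ∈ ℝ^𝒜, (y,1) ∈ G_X(𝒜)* }, where exp is applied entrywise, the dual cone of C_X(𝒜) is taken in ℝ^𝒜, the dual cone of the circuit graph G_X(𝒜) is taken in ℝ^𝒜 × ℝ, and cl denotes topological closure. -/

import Mathlib

open Finset

/-- Dot product on `Fin n → ℝ`. -/
noncomputable def dotp {n : ℕ} (y x : Fin n → ℝ) : ℝ := ∑ i, y i * x i

/-- Support function `σ_X : ℝⁿ → ℝ ∪ {±∞}` of a set `X ⊆ ℝⁿ`. -/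
noncomputable def suppFn {n : ℕ} (X : Set (Fin n → ℝ)) (y : Fin n → ℝ) : EReal :=
  ⨆ x ∈ X, ((dotp y x : ℝ) : EReal)

/-- The linear map `𝒜 : ℝ^𝒜 → ℝⁿ`, `ν ↦ Σ_α ν_α α`. -/
noncomputable def Amap {n m : ℕ} (A : Fin m → Fin n → ℝ) (ν : Fin m → ℝ) : Fin n → ℝ :=
  fun j => ∑ i, ν i * A i j

/-- `N_β = {ν : ν_α ≥ 0 (α ≠ β), Σ ν_α = 0}`. -/
def Nbeta {m : ℕ} (b : Fin m) : Set (Fin m → ℝ) :=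
  {ν | (∀ i, i ≠ b → 0 ≤ ν i) ∧ ∑ i, ν i = 0}

/-- Two vectors are proportional if one is a scalar multiple of the other. -/
def Proportional {m : ℕ} (u v : Fin m → ℝ) : Prop :=
  ∃ t : ℝ, u = t • v ∨ v = t • u

/-- The augmented support function `ν ↦ σ_X(-𝒜ν)`. -/
noncomputable def sigA {n m : ℕ} (X : Set (Fin n → ℝ)) (A : Fin m → Fin n → ℝ)
    (ν : Fin m → ℝ) : EReal :=
  suppFn X (-(Amap A ν))

/-- The map `ν ↦ σ_X(-𝒜ν)` is affine on the segment `[ν1, ν2]`. -/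
def SigmaAffineOnSeg {n m : ℕ} (X : Set (Fin n → ℝ)) (A : Fin m → Fin n → ℝ)
    (ν1 ν2 : Fin m → ℝ) : Prop :=
  ∀ t : ℝ, t ∈ Set.Icc (0:ℝ) 1 →
    sigA X A (t • ν1 + (1 - t) • ν2) =
      (t : EReal) * sigA X A ν1 + ((1 - t : ℝ) : EReal) * sigA X A ν2

/-- `ν` is an `X`-circuit of `𝒜` (with negative index allowed only at `b`). -/
def IsXCircuit {n m : ℕ} (X : Set (Fin n → ℝ)) (A : Fin m → Fin n → ℝ)
    (b : Fin m) (ν : Fin m → ℝ) : Prop :=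
  ν ∈ Nbeta b ∧ ν ≠ 0 ∧ sigA X A ν < ⊤ ∧
  ¬ ∃ (ν1 ν2 : Fin m → ℝ) (θ : ℝ), ν1 ∈ Nbeta b ∧ ν2 ∈ Nbeta b ∧
      ¬ Proportional ν1 ν2 ∧ θ ∈ Set.Ioo (0:ℝ) 1 ∧
      ν = θ • ν1 + (1 - θ) • ν2 ∧ SigmaAffineOnSeg X A ν1 ν2

/-- All finite nonnegative combinations of elements of `S` (including `0`). -/
def coneHull {E : Type*} [AddCommMonoid E] [SMul ℝ E] (S : Set E) : Set E :=
  {x | ∃ (k : ℕ) (t : Fin k → ℝ) (v : Fin k → E),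
    (∀ j, 0 ≤ t j) ∧ (∀ j, v j ∈ S) ∧ x = ∑ j, t j • v j}

/-- `v` is an edge generator of the convex cone `K`. -/
def IsEdgeGenerator {E : Type*} [AddCommMonoid E] [SMul ℝ E] (K : Set E) (v : E) : Prop :=
  v ≠ 0 ∧ v ∈ K ∧ ∀ u ∈ K, ∀ w ∈ K, v = u + w →
    (∃ a : ℝ, 0 ≤ a ∧ u = a • v) ∧ (∃ b : ℝ, 0 ≤ b ∧ w = b • v)

/-- The `X`-AGE cone `C_X(𝒜, β)`, as a cone of coefficient vectors. -/
def AgeCone {n m : ℕ} (X : Set (Fin n → ℝ)) (A : Fin m → Fin n → ℝ) (b : Fin m) :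
    Set (Fin m → ℝ) :=
  {c | (∀ i, i ≠ b → 0 ≤ c i) ∧ ∀ x ∈ X, 0 ≤ ∑ i, c i * Real.exp (dotp (A i) x)}

/-- The `X`-SAGE cone `C_X(𝒜) = Σ_β C_X(𝒜, β)`. -/
def Sage {n m : ℕ} (X : Set (Fin n → ℝ)) (A : Fin m → Fin n → ℝ) : Set (Fin m → ℝ) :=
  {c | ∃ f : Fin m → (Fin m → ℝ), (∀ b, f b ∈ AgeCone X A b) ∧ c = ∑ b, f b}

/-- One summand of the relative entropy, with the conventions `0·log 0 = 0` and
`D = ∞` if `a > 0` while `c ≤ 0`. -/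
noncomputable def relEnt (a c : ℝ) : EReal :=
  if a = 0 then 0 else if 0 < c then ((a * Real.log (a / c) : ℝ) : EReal) else ⊤

/-- The relative entropy `D(ν_{∖β}, e · c_{∖β})`. -/
noncomputable def relEntSum {m : ℕ} (b : Fin m) (ν c : Fin m → ℝ) : EReal :=
  ∑ i ∈ Finset.univ.erase b, relEnt (ν i) (Real.exp 1 * c i)

/-- Condition (★): `ν ∈ N_β`, `ν ≠ 0`, `σ_X(-𝒜ν) + D(ν_{∖β}, e c_{∖β}) ≤ c_β`. -/
def StarCond {n m : ℕ} (X : Set (Fin n → ℝ)) (A : Fin m → Fin n → ℝ)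
    (b : Fin m) (c ν : Fin m → ℝ) : Prop :=
  ν ∈ Nbeta b ∧ ν ≠ 0 ∧ sigA X A ν + relEntSum b ν c ≤ (c b : EReal)

/-- The `λ`-witnessed AGE cone `C_X(𝒜, λ)` for a normalized `λ` with `λ_β = -1`. -/
noncomputable def WitnessCone {n m : ℕ} (X : Set (Fin n → ℝ)) (A : Fin m → Fin n → ℝ)
    (b : Fin m) (l : Fin m → ℝ) : Set (Fin m → ℝ) :=
  {c | (∀ i, i ≠ b → 0 ≤ c i) ∧
    (-(c b)) * Real.exp ((sigA X A l).toReal) ≤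
      ∏ i ∈ Finset.univ.filter (fun i => 0 < l i), (c i / l i) ^ (l i)}

/-- Normalized `X`-circuits in `N_β`. -/
def LambdaB {n m : ℕ} (X : Set (Fin n → ℝ)) (A : Fin m → Fin n → ℝ) (b : Fin m) :
    Set (Fin m → ℝ) :=
  {l | IsXCircuit X A b l ∧ l b = -1}

/-- All normalized `X`-circuits of `𝒜`. -/
def Lambda {n m : ℕ} (X : Set (Fin n → ℝ)) (A : Fin m → Fin n → ℝ) : Set (Fin m → ℝ) :=
  ⋃ b, LambdaB X A b

/-- Functional form `φ_λ = (λ, σ_X(-𝒜λ)) ∈ ℝ^𝒜 × ℝ`. -/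
noncomputable def phiVec {n m : ℕ} (X : Set (Fin n → ℝ)) (A : Fin m → Fin n → ℝ)
    (l : Fin m → ℝ) : (Fin m → ℝ) × ℝ :=
  (l, (sigA X A l).toReal)

/-- Functional form as an affine function `φ_λ(y) = Σ y_α λ_α + σ_X(-𝒜λ)`. -/
noncomputable def phiFun {n m : ℕ} (X : Set (Fin n → ℝ)) (A : Fin m → Fin n → ℝ)
    (l : Fin m → ℝ) (y : Fin m → ℝ) : ℝ :=
  (∑ i, y i * l i) + (sigA X A l).toReal

/-- The circuit graph `G_X(𝒜)`. -/
noncomputable def circuitGraph {n m : ℕ} (X : Set (Fin n → ℝ)) (A : Fin m → Fin n → ℝ) :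
    Set ((Fin m → ℝ) × ℝ) :=
  coneHull ((phiVec X A '' Lambda X A) ∪ {((0 : Fin m → ℝ), (1 : ℝ))})

/-- The reduced normalized `X`-circuits `Λ*_X(𝒜)`. -/
noncomputable def LambdaStar {n m : ℕ} (X : Set (Fin n → ℝ)) (A : Fin m → Fin n → ℝ) :
    Set (Fin m → ℝ) :=
  {l | l ∈ Lambda X A ∧ IsEdgeGenerator (circuitGraph X A) (phiVec X A l)}

/-- `λ`-witnessed AGE cone for a normalized circuit, with `β` recovered from `λ`. -/
noncomputable def WitnessConeL {n m : ℕ} (X : Set (Fin n → ℝ)) (A : Fin m → Fin n → ℝ)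
    (l : Fin m → ℝ) : Set (Fin m → ℝ) :=
  ⋃ b ∈ {b : Fin m | l b = -1}, WitnessCone X A b l

/-- Dual cone of a set of coefficient vectors in `ℝ^𝒜`. -/
def dualConeV {m : ℕ} (K : Set (Fin m → ℝ)) : Set (Fin m → ℝ) :=
  {v | ∀ c ∈ K, 0 ≤ ∑ i, v i * c i}

/-- Dual cone of a subset of `ℝ^𝒜 × ℝ`. -/
def dualConeP {m : ℕ} (K : Set ((Fin m → ℝ) × ℝ)) : Set ((Fin m → ℝ) × ℝ) :=
  {p | ∀ q ∈ K, 0 ≤ (∑ i, p.1 i * q.1 i) + p.2 * q.2}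

/-- The basis functions `x ↦ exp(αᵀx)`, `α ∈ 𝒜`, are linearly independent on `X`. -/
def ExpLinIndep {n m : ℕ} (X : Set (Fin n → ℝ)) (A : Fin m → Fin n → ℝ) : Prop :=
  LinearIndependent ℝ (fun i : Fin m => fun x : X => Real.exp (dotp (A i) (x : Fin n → ℝ)))

/-- `X` is a polyhedron: an intersection of finitely many closed halfspaces. -/
def IsPolyhedron {n : ℕ} (X : Set (Fin n → ℝ)) : Prop :=
  ∃ (k : ℕ) (a : Fin k → Fin n → ℝ) (bb : Fin k → ℝ),
    X = {x | ∀ i, dotp (a i) x ≤ bb i}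

/-- Minkowski sum `Σ_{l ∈ Λ} C(l)` (finite sums, one summand per `l`;
the empty sum gives `{0}`). -/
def MinkSumOver {m : ℕ} (Λ : Set (Fin m → ℝ)) (C : (Fin m → ℝ) → Set (Fin m → ℝ)) :
    Set (Fin m → ℝ) :=
  {c | ∃ (s : Finset (Fin m → ℝ)) (f : (Fin m → ℝ) → (Fin m → ℝ)),
    (↑s ⊆ Λ) ∧ (∀ l ∈ s, f l ∈ C l) ∧ c = ∑ l ∈ s, f l}

section Basics

variable {n m : ℕ} (X : Set (Fin n → ℝ)) (A : Fin m → Fin n → ℝ)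

lemma dotp_Amap (ν : Fin m → ℝ) (x : Fin n → ℝ) :
    dotp (Amap A ν) x = ∑ i, ν i * dotp (A i) x := by
  unfold dotp Amap
  simp only [Finset.sum_mul, Finset.mul_sum]
  rw [Finset.sum_comm]
  congr 1; ext i; congr 1; ext j; ring

lemma dotp_neg (y x : Fin n → ℝ) : dotp (-y) x = -dotp y x := by
  unfold dotp; simp [← Finset.sum_neg_distrib]

lemma dotp_negAmap (ν : Fin m → ℝ) (x : Fin n → ℝ) :
    dotp (-(Amap A ν)) x = -∑ i, ν i * dotp (A i) x := by
  rw [dotp_neg, dotp_Amap]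

lemma dotp_negAmap_smul (s : ℝ) (ν : Fin m → ℝ) (x : Fin n → ℝ) :
    dotp (-(Amap A (s • ν))) x = s * dotp (-(Amap A ν)) x := by
  simp only [dotp_negAmap, Pi.smul_apply, smul_eq_mul, Finset.mul_sum, ← neg_mul,
    mul_assoc, ← Finset.sum_neg_distrib]
  ring_nf

lemma dotp_negAmap_add (ν μ : Fin m → ℝ) (x : Fin n → ℝ) :
    dotp (-(Amap A (ν + μ))) x = dotp (-(Amap A ν)) x + dotp (-(Amap A μ)) x := by
  simp only [dotp_negAmap, Pi.add_apply, add_mul, Finset.sum_add_distrib]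
  ring

lemma dotp_negAmap_zero (x : Fin n → ℝ) : dotp (-(Amap A (0 : Fin m → ℝ))) x = 0 := by
  simp [dotp_negAmap]

end Basics
section SigA

variable {n m : ℕ} {X : Set (Fin n → ℝ)} {A : Fin m → Fin n → ℝ}

lemma coe_dotp_le_sigA {ν : Fin m → ℝ} {x : Fin n → ℝ} (hx : x ∈ X) :
    ((dotp (-(Amap A ν)) x : ℝ) : EReal) ≤ sigA X A ν := by
  unfold sigA suppFn
  exact le_biSup (fun x => ((dotp (-(Amap A ν)) x : ℝ) : EReal)) hx

lemma sigA_ne_bot (hXne : X.Nonempty) (ν : Fin m → ℝ) : sigA X A ν ≠ ⊥ := by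
  obtain ⟨x, hx⟩ := hXne
  exact fun h => by simpa [h] using coe_dotp_le_sigA (A := A) (ν := ν) hx

lemma sigA_le_coe_iff {ν : Fin m → ℝ} {t : ℝ} :
    sigA X A ν ≤ (t : EReal) ↔ ∀ x ∈ X, dotp (-(Amap A ν)) x ≤ t := by
  unfold sigA suppFn
  rw [iSup₂_le_iff]
  exact forall₂_congr (fun x hx => EReal.coe_le_coe_iff)

lemma sigA_lt_top_of_le {ν : Fin m → ℝ} {t : ℝ} (h : ∀ x ∈ X, dotp (-(Amap A ν)) x ≤ t) :
    sigA X A ν < ⊤ :=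
  lt_of_le_of_lt (sigA_le_coe_iff.2 h) (EReal.coe_lt_top t)

lemma sigA_toReal_le (hXne : X.Nonempty) {ν : Fin m → ℝ} {t : ℝ}
    (h : ∀ x ∈ X, dotp (-(Amap A ν)) x ≤ t) : (sigA X A ν).toReal ≤ t := by
  have := EReal.toReal_le_toReal (sigA_le_coe_iff.2 h) (sigA_ne_bot hXne ν) (EReal.coe_ne_top t)
  simpa using this

lemma dotp_le_sigA_toReal (hXne : X.Nonempty) {ν : Fin m → ℝ} (hν : sigA X A ν < ⊤)
    {x : Fin n → ℝ} (hx : x ∈ X) : dotp (-(Amap A ν)) x ≤ (sigA X A ν).toReal := by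
  have h1 := coe_dotp_le_sigA (A := A) (ν := ν) hx
  have := EReal.toReal_le_toReal h1 (EReal.coe_ne_bot _) (ne_of_lt hν)
  simpa using this

lemma sigA_coe_toReal (hXne : X.Nonempty) {ν : Fin m → ℝ} (hν : sigA X A ν < ⊤) :
    ((sigA X A ν).toReal : EReal) = sigA X A ν :=
  EReal.coe_toReal (ne_of_lt hν) (sigA_ne_bot hXne ν)

lemma sigA_zero (hXne : X.Nonempty) : sigA X A (0 : Fin m → ℝ) = 0 := by
  apply le_antisymm
  · rw [show ((0:EReal)) = ((0:ℝ):EReal) by simp, sigA_le_coe_iff]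
    intro x hx; simp [dotp_negAmap_zero]
  · obtain ⟨x, hx⟩ := hXne
    have := coe_dotp_le_sigA (A := A) (ν := (0 : Fin m → ℝ)) hx
    simpa [dotp_negAmap_zero] using this

/-- toReal-level positive homogeneity, upper half. -/
lemma sigA_smul_lt_top (hXne : X.Nonempty) {ν : Fin m → ℝ} (hν : sigA X A ν < ⊤)
    {s : ℝ} (hs : 0 < s) : sigA X A (s • ν) < ⊤ := by
  apply sigA_lt_top_of_le (t := s * (sigA X A ν).toReal)
  intro x hx
  rw [dotp_negAmap_smul]
  exact mul_le_mul_of_nonneg_left (dotp_le_sigA_toReal hXne hν hx) hs.le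

lemma sigA_toReal_smul (hXne : X.Nonempty) {ν : Fin m → ℝ} (hν : sigA X A ν < ⊤)
    {s : ℝ} (hs : 0 < s) : (sigA X A (s • ν)).toReal = s * (sigA X A ν).toReal := by
  have h1 : (sigA X A (s • ν)).toReal ≤ s * (sigA X A ν).toReal := by
    apply sigA_toReal_le hXne
    intro x hx; rw [dotp_negAmap_smul]
    exact mul_le_mul_of_nonneg_left (dotp_le_sigA_toReal hXne hν hx) hs.le
  have h2 : (sigA X A ν).toReal ≤ s⁻¹ * (sigA X A (s • ν)).toReal := by
    apply sigA_toReal_le hXne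
    intro x hx
    have := dotp_le_sigA_toReal hXne (sigA_smul_lt_top hXne hν hs) hx
    rw [dotp_negAmap_smul] at this
    rw [← le_div_iff₀' hs] at this
    rw [div_eq_inv_mul] at this
    exact this
  have h3 := mul_le_mul_of_nonneg_left h2 hs.le
  rw [← mul_assoc, mul_inv_cancel₀ (ne_of_gt hs), one_mul] at h3
  linarith

end SigA
section KconeSec

variable {n m : ℕ} (X : Set (Fin n → ℝ)) (A : Fin m → Fin n → ℝ) (b : Fin m)

/-- The epigraph cone `K_b = {(ν,t) : ν ∈ N_b, σ_X(-Aν) ≤ t}` (via pointwise bounds). -/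
def Kcone : Set ((Fin m → ℝ) × ℝ) :=
  {p | p.1 ∈ Nbeta b ∧ ∀ x ∈ X, dotp (-(Amap A p.1)) x ≤ p.2}

variable {X A b}

/-- Pairing `p ↦ ⟨y, p.1⟩ + p.2`. -/
def pairy (y : Fin m → ℝ) (p : (Fin m → ℝ) × ℝ) : ℝ := (∑ i, y i * p.1 i) + p.2

lemma pairy_add (y : Fin m → ℝ) (p q : (Fin m → ℝ) × ℝ) :
    pairy y (p + q) = pairy y p + pairy y q := by
  unfold pairy
  simp [Prod.fst_add, Prod.snd_add, mul_add, Finset.sum_add_distrib]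
  ring

lemma pairy_smul (y : Fin m → ℝ) (s : ℝ) (p : (Fin m → ℝ) × ℝ) :
    pairy y (s • p) = s * pairy y p := by
  unfold pairy
  simp [Prod.smul_fst, Prod.smul_snd, Finset.mul_sum, mul_add]
  ring_nf
  congr 1
  funext i
  ring

lemma pairy_continuous (y : Fin m → ℝ) : Continuous (pairy y) := by
  unfold pairy
  apply Continuous.add _ continuous_snd
  apply continuous_finset_sum
  intro i _
  exact continuous_const.mul ((continuous_apply i).comp continuous_fst)

lemma pairy_zero (y : Fin m → ℝ) : pairy y 0 = 0 := by
  unfold pairy; simp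

lemma Nbeta_smul {ν : Fin m → ℝ} (hν : ν ∈ Nbeta b) {s : ℝ} (hs : 0 ≤ s) :
    s • ν ∈ Nbeta b := by
  obtain ⟨h1, h2⟩ := hν
  constructor
  · intro i hi
    exact mul_nonneg hs (h1 i hi)
  · simp only [Pi.smul_apply, smul_eq_mul, ← Finset.mul_sum, h2, mul_zero]

lemma Kcone_smul {p : (Fin m → ℝ) × ℝ} (hp : p ∈ Kcone X A b) {s : ℝ} (hs : 0 ≤ s) :
    s • p ∈ Kcone X A b := by
  obtain ⟨h1, h2⟩ := hp
  refine ⟨Nbeta_smul h1 hs, ?_⟩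
  intro x hx
  rw [Prod.smul_fst, Prod.smul_snd, dotp_negAmap_smul, smul_eq_mul]
  exact mul_le_mul_of_nonneg_left (h2 x hx) hs

lemma Kcone_add {p q : (Fin m → ℝ) × ℝ} (hp : p ∈ Kcone X A b) (hq : q ∈ Kcone X A b) :
    p + q ∈ Kcone X A b := by
  obtain ⟨⟨hp1, hp2⟩, hp3⟩ := hp
  obtain ⟨⟨hq1, hq2⟩, hq3⟩ := hq
  refine ⟨⟨fun i hi => add_nonneg (hp1 i hi) (hq1 i hi), ?_⟩, ?_⟩
  · simp only [Prod.fst_add, Pi.add_apply, Finset.sum_add_distrib, hp2, hq2, add_zero]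
  · intro x hx
    rw [Prod.fst_add, dotp_negAmap_add, Prod.snd_add]
    exact add_le_add (hp3 x hx) (hq3 x hx)

lemma Kcone_convex : Convex ℝ (Kcone X A b) := by
  intro p hp q hq a c ha hc _
  exact Kcone_add (Kcone_smul hp ha) (Kcone_smul hq hc)

lemma Kcone_closed : IsClosed (Kcone X A b) := by
  have h1 : IsClosed {p : (Fin m → ℝ) × ℝ | p.1 ∈ Nbeta b} := by
    have : {p : (Fin m → ℝ) × ℝ | p.1 ∈ Nbeta b} =
        (⋂ i ∈ Finset.univ.erase b, {p : (Fin m → ℝ) × ℝ | 0 ≤ p.1 i}) ∩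
          {p : (Fin m → ℝ) × ℝ | ∑ i, p.1 i = 0} := by
      ext p
      simp only [Set.mem_setOf_eq, Set.mem_inter_iff, Set.mem_iInter, Finset.mem_erase,
        Finset.mem_univ, and_true, Nbeta, Set.mem_setOf_eq]
    rw [this]
    refine IsClosed.inter (isClosed_biInter fun i _ => ?_) ?_
    · exact isClosed_le continuous_const ((continuous_apply i).comp continuous_fst)
    · exact isClosed_eq (continuous_finset_sum _ fun i _ =>
        (continuous_apply i).comp continuous_fst) continuous_const
  have h2 : IsClosed (⋂ x ∈ X, {p : (Fin m → ℝ) × ℝ | dotp (-(Amap A p.1)) x ≤ p.2}) := by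
    refine isClosed_biInter fun x _ => ?_
    have hc : Continuous fun p : (Fin m → ℝ) × ℝ => dotp (-(Amap A p.1)) x := by
      have : (fun p : (Fin m → ℝ) × ℝ => dotp (-(Amap A p.1)) x) =
          fun p => -∑ i, p.1 i * dotp (A i) x := by
        funext p; rw [dotp_negAmap]
      rw [this]
      exact (continuous_finset_sum _ fun i _ =>
        ((continuous_apply i).comp continuous_fst).mul continuous_const).neg
    exact isClosed_le hc continuous_snd
  have : Kcone X A b = {p : (Fin m → ℝ) × ℝ | p.1 ∈ Nbeta b} ∩
      ⋂ x ∈ X, {p : (Fin m → ℝ) × ℝ | dotp (-(Amap A p.1)) x ≤ p.2} := by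
    ext p
    simp only [Kcone, Set.mem_setOf_eq, Set.mem_inter_iff, Set.mem_iInter]
  rw [this]
  exact h1.inter h2

lemma Nbeta_sum_erase {ν : Fin m → ℝ} (hν : ν ∈ Nbeta b) :
    ν b = -∑ i ∈ Finset.univ.erase b, ν i := by
  have := hν.2
  rw [← Finset.sum_erase_add _ _ (Finset.mem_univ b)] at this
  linarith

lemma Nbeta_eq_zero {ν : Fin m → ℝ} (hν : ν ∈ Nbeta b)
    (h : ∀ i, i ≠ b → ν i = 0) : ν = 0 := by
  funext i
  by_cases hi : i = b
  · subst hi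
    rw [Nbeta_sum_erase hν, Finset.sum_eq_zero (fun j hj => h j (Finset.ne_of_mem_erase hj))]
    simp
  · exact h i hi

end KconeSec
section BaseSec

variable {n m : ℕ} {X : Set (Fin n → ℝ)} {A : Fin m → Fin n → ℝ} {b : Fin m}

/-- The strictly positive functional on `K_b`. -/
noncomputable def wfun (A : Fin m → Fin n → ℝ) (b : Fin m) (x₀ : Fin n → ℝ) : Fin m → ℝ :=
  fun i => dotp (A i) x₀ + (if i = b then -1 else 1)

lemma pairy_wfun_eq (x₀ : Fin n → ℝ) {p : (Fin m → ℝ) × ℝ} (hp : p.1 ∈ Nbeta b) :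
    pairy (wfun A b x₀) p =
      2 * (∑ i ∈ Finset.univ.erase b, p.1 i) + ((∑ i, p.1 i * dotp (A i) x₀) + p.2) := by
  unfold pairy wfun
  have h1 : ∀ i, (dotp (A i) x₀ + (if i = b then -1 else 1)) * p.1 i =
      p.1 i * dotp (A i) x₀ + (if i = b then -1 else 1) * p.1 i := by
    intro i; ring
  simp only [h1, Finset.sum_add_distrib]
  have h2 : ∑ i, (if i = b then (-1:ℝ) else 1) * p.1 i =
      2 * ∑ i ∈ Finset.univ.erase b, p.1 i := by
    rw [← Finset.sum_erase_add _ _ (Finset.mem_univ b)]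
    rw [Finset.sum_congr rfl (fun i hi => by
      rw [if_neg (Finset.ne_of_mem_erase hi), one_mul])]
    rw [if_pos rfl, Nbeta_sum_erase hp]
    ring
  rw [h2]; ring

lemma erase_sum_nonneg {p : (Fin m → ℝ) × ℝ} (hp : p.1 ∈ Nbeta b) :
    0 ≤ ∑ i ∈ Finset.univ.erase b, p.1 i :=
  Finset.sum_nonneg fun i hi => hp.1 i (Finset.ne_of_mem_erase hi)

lemma second_piece_nonneg {x₀ : Fin n → ℝ} (hx₀ : x₀ ∈ X) {p : (Fin m → ℝ) × ℝ}
    (hp : p ∈ Kcone X A b) : 0 ≤ (∑ i, p.1 i * dotp (A i) x₀) + p.2 := by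
  have := hp.2 x₀ hx₀
  rw [dotp_negAmap] at this
  linarith

lemma pairy_wfun_nonneg {x₀ : Fin n → ℝ} (hx₀ : x₀ ∈ X) {p : (Fin m → ℝ) × ℝ}
    (hp : p ∈ Kcone X A b) : 0 ≤ pairy (wfun A b x₀) p := by
  rw [pairy_wfun_eq x₀ hp.1]
  have := erase_sum_nonneg hp.1
  have := second_piece_nonneg hx₀ hp
  linarith

lemma pairy_wfun_pos {x₀ : Fin n → ℝ} (hx₀ : x₀ ∈ X) {p : (Fin m → ℝ) × ℝ}
    (hp : p ∈ Kcone X A b) (hp0 : p ≠ 0) : 0 < pairy (wfun A b x₀) p := by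
  rcases eq_or_ne p.1 0 with h1 | h1
  · have ht : 0 < p.2 := by
      have h2 := hp.2 x₀ hx₀
      rw [h1, dotp_negAmap_zero] at h2
      rcases lt_or_eq_of_le h2 with h | h
      · exact h
      · exact absurd (Prod.ext h1 h.symm) hp0
    rw [pairy_wfun_eq x₀ hp.1, h1]
    simp [ht]
  · have hS : 0 < ∑ i ∈ Finset.univ.erase b, p.1 i := by
      rcases lt_or_eq_of_le (erase_sum_nonneg hp.1) with h | h
      · exact h
      · exfalso
        apply h1
        apply Nbeta_eq_zero hp.1
        intro i hi
        have := Finset.sum_eq_zero_iff_of_nonneg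
          (fun j hj => hp.1.1 j (Finset.ne_of_mem_erase hj)) |>.1 h.symm
        exact this i (Finset.mem_erase.2 ⟨hi, Finset.mem_univ i⟩)
    rw [pairy_wfun_eq x₀ hp.1]
    have := second_piece_nonneg hx₀ hp
    linarith

/-- The compact base of `K_b`. -/
def Bbase (X : Set (Fin n → ℝ)) (A : Fin m → Fin n → ℝ) (b : Fin m) (x₀ : Fin n → ℝ) :
    Set ((Fin m → ℝ) × ℝ) :=
  {p ∈ Kcone X A b | pairy (wfun A b x₀) p = 1}

lemma Bbase_convex (x₀ : Fin n → ℝ) : Convex ℝ (Bbase X A b x₀) := by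
  intro p hp q hq a c ha hc hac
  refine ⟨Kcone_convex hp.1 hq.1 ha hc hac, ?_⟩
  rw [pairy_add, pairy_smul, pairy_smul, hp.2, hq.2]
  simpa using hac

lemma Bbase_isClosed (x₀ : Fin n → ℝ) : IsClosed (Bbase X A b x₀) :=
  Kcone_closed.inter (isClosed_eq (pairy_continuous _) continuous_const)

lemma Bbase_isCompact {x₀ : Fin n → ℝ} (hx₀ : x₀ ∈ X) : IsCompact (Bbase X A b x₀) := by
  apply Metric.isCompact_of_isClosed_isBounded (Bbase_isClosed x₀)
  rw [isBounded_iff_forall_norm_le]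
  set C : ℝ := ∑ i, |dotp (A i) x₀| with hC
  have hC0 : 0 ≤ C := Finset.sum_nonneg fun i _ => abs_nonneg _
  refine ⟨1 + C, ?_⟩
  rintro p ⟨hpK, hpG⟩
  rw [pairy_wfun_eq x₀ hpK.1] at hpG
  have hS0 := erase_sum_nonneg hpK.1
  have hsp := second_piece_nonneg hx₀ hpK
  set S := ∑ i ∈ Finset.univ.erase b, p.1 i with hSdef
  have hShalf : S ≤ 1/2 := by linarith
  have hcoord : ∀ i, |p.1 i| ≤ 1/2 := by
    intro i
    by_cases hi : i = b
    · subst hi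
      rw [Nbeta_sum_erase hpK.1, abs_neg, abs_of_nonneg hS0]
      exact hShalf
    · rw [abs_of_nonneg (hpK.1.1 i hi)]
      calc p.1 i ≤ S := Finset.single_le_sum
            (fun j hj => hpK.1.1 j (Finset.ne_of_mem_erase hj))
            (Finset.mem_erase.2 ⟨hi, Finset.mem_univ i⟩)
        _ ≤ 1/2 := hShalf
  have hdot : |∑ i, p.1 i * dotp (A i) x₀| ≤ C := by
    calc |∑ i, p.1 i * dotp (A i) x₀| ≤ ∑ i, |p.1 i * dotp (A i) x₀| :=
          Finset.abs_sum_le_sum_abs _ _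
      _ ≤ ∑ i, |dotp (A i) x₀| := Finset.sum_le_sum (fun i _ => by
          rw [abs_mul]
          calc |p.1 i| * |dotp (A i) x₀| ≤ 1 * |dotp (A i) x₀| := by
                apply mul_le_mul_of_nonneg_right _ (abs_nonneg _)
                linarith [hcoord i]
            _ = |dotp (A i) x₀| := one_mul _)
  have ht : |p.2| ≤ 1 + C := by
    rw [abs_le]
    constructor
    · linarith [le_abs_self (∑ i, p.1 i * dotp (A i) x₀)]
    · have h3 : (∑ i, p.1 i * dotp (A i) x₀) + p.2 ≤ 1 := by linarith
      linarith [neg_abs_le (∑ i, p.1 i * dotp (A i) x₀)]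
  rw [Prod.norm_def]
  apply max_le
  · rw [pi_norm_le_iff_of_nonneg (by linarith)]
    intro i
    rw [Real.norm_eq_abs]
    linarith [hcoord i]
  · rw [Real.norm_eq_abs]; exact ht

lemma Bbase_scale {x₀ : Fin n → ℝ} (hx₀ : x₀ ∈ X) {p : (Fin m → ℝ) × ℝ}
    (hp : p ∈ Kcone X A b) (hp0 : p ≠ 0) :
    (pairy (wfun A b x₀) p)⁻¹ • p ∈ Bbase X A b x₀ ∧
      p = (pairy (wfun A b x₀) p) • ((pairy (wfun A b x₀) p)⁻¹ • p) := by
  have hpos := pairy_wfun_pos hx₀ hp hp0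
  constructor
  · refine ⟨Kcone_smul hp (inv_nonneg.2 hpos.le), ?_⟩
    rw [pairy_smul]
    field_simp
  · rw [smul_smul, mul_inv_cancel₀ (ne_of_gt hpos), one_smul]

/-- Decomposition at an extreme point of the base forces proportionality. -/
lemma ext_decomp {x₀ : Fin n → ℝ} (hx₀ : x₀ ∈ X)
    {p : (Fin m → ℝ) × ℝ} (hp : p ∈ Set.extremePoints ℝ (Bbase X A b x₀))
    {q₁ q₂ : (Fin m → ℝ) × ℝ} (h1 : q₁ ∈ Kcone X A b) (h2 : q₂ ∈ Kcone X A b)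
    (hq1 : q₁ ≠ 0) (hq2 : q₂ ≠ 0) {θ : ℝ} (hθ : θ ∈ Set.Ioo (0:ℝ) 1)
    (hpq : p = θ • q₁ + (1 - θ) • q₂) :
    ∃ a₁ a₂ : ℝ, 0 < a₁ ∧ 0 < a₂ ∧ q₁ = a₁ • p ∧ q₂ = a₂ • p := by
  obtain ⟨hpB, hext⟩ := hp
  set a₁ := pairy (wfun A b x₀) q₁ with ha₁
  set a₂ := pairy (wfun A b x₀) q₂ with ha₂
  have hpa₁ : 0 < a₁ := pairy_wfun_pos hx₀ h1 hq1
  have hpa₂ : 0 < a₂ := pairy_wfun_pos hx₀ h2 hq2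
  have hb₁ : a₁⁻¹ • q₁ ∈ Bbase X A b x₀ := by
    refine ⟨Kcone_smul h1 (inv_nonneg.2 hpa₁.le), ?_⟩
    rw [pairy_smul]; field_simp; exact ha₁.symm
  have hb₂ : a₂⁻¹ • q₂ ∈ Bbase X A b x₀ := by
    refine ⟨Kcone_smul h2 (inv_nonneg.2 hpa₂.le), ?_⟩
    rw [pairy_smul]; field_simp; exact ha₂.symm
  have hsum : θ * a₁ + (1 - θ) * a₂ = 1 := by
    have : pairy (wfun A b x₀) p = 1 := hpB.2
    rw [hpq, pairy_add, pairy_smul, pairy_smul] at this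
    linarith
  have hseg : p ∈ openSegment ℝ (a₁⁻¹ • q₁) (a₂⁻¹ • q₂) := by
    refine ⟨θ * a₁, (1 - θ) * a₂, mul_pos hθ.1 hpa₁,
      mul_pos (by linarith [hθ.2]) hpa₂, hsum, ?_⟩
    rw [smul_smul, smul_smul]
    rw [mul_assoc, mul_inv_cancel₀ (ne_of_gt hpa₁), mul_one,
      mul_assoc, mul_inv_cancel₀ (ne_of_gt hpa₂), mul_one]
    exact hpq.symm
  obtain e₁ := hext hb₁ hb₂ hseg
  obtain e₂ := hext hb₂ hb₁ (by rw [openSegment_symm]; exact hseg)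
  refine ⟨a₁, a₂, hpa₁, hpa₂, ?_, ?_⟩
  · rw [← e₁, smul_smul, mul_inv_cancel₀ (ne_of_gt hpa₁), one_smul]
  · rw [← e₂, smul_smul, mul_inv_cancel₀ (ne_of_gt hpa₂), one_smul]

end BaseSec
section ExtremeSec

variable {n m : ℕ} {X : Set (Fin n → ℝ)} {A : Fin m → Fin n → ℝ} {b : Fin m}

lemma EReal.pos_mul_ne_bot {c : ℝ} (hc : 0 < c) {x : EReal} (hx : x ≠ ⊥) :
    (c : EReal) * x ≠ ⊥ := by
  induction x using EReal.rec with
  | bot => exact absurd rfl hx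
  | coe r => rw [← EReal.coe_mul]; exact EReal.coe_ne_bot _
  | top => rw [EReal.coe_mul_top_of_pos hc]; simp

lemma sigAffine_comb (hXne : X.Nonempty) {ν1 ν2 l : Fin m → ℝ} {θ : ℝ}
    (hθ : θ ∈ Set.Ioo (0:ℝ) 1) (haff : SigmaAffineOnSeg X A ν1 ν2)
    (hdec : l = θ • ν1 + (1 - θ) • ν2) (hl : sigA X A l < ⊤) :
    sigA X A ν1 < ⊤ ∧ sigA X A ν2 < ⊤ ∧
      (sigA X A l).toReal = θ * (sigA X A ν1).toReal + (1 - θ) * (sigA X A ν2).toReal := by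
  have hA := haff θ ⟨hθ.1.le, hθ.2.le⟩
  rw [← hdec] at hA
  have hθ1 : (0:ℝ) < 1 - θ := by linarith [hθ.2]
  have hσ1 : sigA X A ν1 < ⊤ := by
    by_contra h
    rw [not_lt, top_le_iff] at h
    rw [h, EReal.coe_mul_top_of_pos hθ.1,
      EReal.top_add_of_ne_bot (EReal.pos_mul_ne_bot hθ1 (sigA_ne_bot hXne ν2))] at hA
    exact absurd hA (ne_of_lt hl)
  have hσ2 : sigA X A ν2 < ⊤ := by
    by_contra h
    rw [not_lt, top_le_iff] at h
    rw [h, EReal.coe_mul_top_of_pos hθ1,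
      EReal.add_top_of_ne_bot (EReal.pos_mul_ne_bot hθ.1 (sigA_ne_bot hXne ν1))] at hA
    exact absurd hA (ne_of_lt hl)
  refine ⟨hσ1, hσ2, ?_⟩
  rw [← sigA_coe_toReal hXne hσ1, ← sigA_coe_toReal hXne hσ2, ← EReal.coe_mul,
    ← EReal.coe_mul, ← EReal.coe_add] at hA
  rw [hA, EReal.toReal_coe]

lemma Nbeta_b_neg {ν : Fin m → ℝ} (hν : ν ∈ Nbeta b) (h0 : ν ≠ 0) : ν b < 0 := by
  have hS : 0 ≤ ∑ i ∈ Finset.univ.erase b, ν i :=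
    Finset.sum_nonneg fun i hi => hν.1 i (Finset.ne_of_mem_erase hi)
  rcases lt_or_eq_of_le hS with h | h
  · rw [Nbeta_sum_erase hν]; linarith
  · exfalso
    apply h0
    apply Nbeta_eq_zero hν
    intro i hi
    exact Finset.sum_eq_zero_iff_of_nonneg
      (fun j hj => hν.1 j (Finset.ne_of_mem_erase hj)) |>.1 h.symm i
      (Finset.mem_erase.2 ⟨hi, Finset.mem_univ i⟩)

lemma extreme_nonneg (hXne : X.Nonempty) {x₀ : Fin n → ℝ} (hx₀ : x₀ ∈ X) (y : Fin m → ℝ)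
    (hcirc : ∀ l ∈ Lambda X A, 0 ≤ (∑ i, y i * l i) + (sigA X A l).toReal)
    {p : (Fin m → ℝ) × ℝ} (hp : p ∈ Set.extremePoints ℝ (Bbase X A b x₀)) :
    0 ≤ pairy y p := by
  have hpK : p ∈ Kcone X A b := hp.1.1
  rcases eq_or_ne p.1 0 with hν | hν
  · have := hpK.2 x₀ hx₀
    rw [hν, dotp_negAmap_zero] at this
    unfold pairy
    rw [hν]
    simpa using this
  -- nonzero first coordinate
  have hσtop : sigA X A p.1 < ⊤ := sigA_lt_top_of_le hpK.2
  have hσle : (sigA X A p.1).toReal ≤ p.2 := sigA_toReal_le hXne hpK.2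
  -- the second coordinate equals the support function value
  have ht : p.2 = (sigA X A p.1).toReal := by
    by_contra hne
    have hlt : (sigA X A p.1).toReal < p.2 := lt_of_le_of_ne hσle (Ne.symm hne)
    set q₁ : (Fin m → ℝ) × ℝ := (p.1, (sigA X A p.1).toReal) with hq₁
    set q₂ : (Fin m → ℝ) × ℝ := (p.1, 2 * p.2 - (sigA X A p.1).toReal) with hq₂
    have h1 : q₁ ∈ Kcone X A b := ⟨hpK.1, fun x hx => dotp_le_sigA_toReal hXne hσtop hx⟩
    have h2 : q₂ ∈ Kcone X A b := ⟨hpK.1, fun x hx => by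
      have := dotp_le_sigA_toReal hXne hσtop hx
      simp only [hq₂]
      linarith⟩
    have hq10 : q₁ ≠ 0 := fun h => hν (congrArg Prod.fst h)
    have hq20 : q₂ ≠ 0 := fun h => hν (congrArg Prod.fst h)
    have hpq : p = (1/2 : ℝ) • q₁ + (1 - (1/2 : ℝ)) • q₂ := by
      apply Prod.ext
      · show p.1 = ((1/2 : ℝ) • q₁ + (1 - (1/2:ℝ)) • q₂).1
        simp only [Prod.fst_add, Prod.smul_fst, hq₁, hq₂, ← add_smul]
        norm_num
      · show p.2 = ((1/2 : ℝ) • q₁ + (1 - (1/2:ℝ)) • q₂).2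
        simp only [Prod.snd_add, Prod.smul_snd, hq₁, hq₂, smul_eq_mul]
        ring
    obtain ⟨a₁, a₂, ha₁, ha₂, he₁, he₂⟩ :=
      ext_decomp hx₀ hp h1 h2 hq10 hq20 (by norm_num : (1/2:ℝ) ∈ Set.Ioo (0:ℝ) 1) hpq
    obtain ⟨i, hi⟩ := Function.ne_iff.1 hν
    have hfst : p.1 i = a₁ * p.1 i := by
      have := congrArg Prod.fst he₁
      simp only [hq₁, Prod.smul_fst] at this
      exact congrFun this i
    have ha1 : a₁ = 1 := by
      by_contra h
      apply hi
      have : p.1 i * (1 - a₁) = 0 := by linarith [hfst]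
      rcases mul_eq_zero.1 this with h' | h'
      · exact h'
      · exact absurd (by linarith : a₁ = 1) h
    have hsnd : (sigA X A p.1).toReal = a₁ * p.2 := by
      have := congrArg Prod.snd he₁
      simpa [hq₁] using this
    rw [ha1, one_mul] at hsnd
    exact hne hsnd.symm
  -- normalize to a circuit
  have hνb : p.1 b < 0 := Nbeta_b_neg hpK.1 hν
  set c : ℝ := -(p.1 b) with hc
  have hcpos : 0 < c := by simp [hc]; linarith
  set l : Fin m → ℝ := c⁻¹ • p.1 with hl
  have hlb : l b = -1 := by
    simp only [hl, Pi.smul_apply, smul_eq_mul, hc]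
    field_simp
    rw [div_self hνb.ne]
  have hlN : l ∈ Nbeta b := Nbeta_smul hpK.1 (inv_nonneg.2 hcpos.le)
  have hl0 : l ≠ 0 := fun h => by simp [h] at hlb
  have hlσ : sigA X A l < ⊤ := sigA_smul_lt_top hXne hσtop (inv_pos.2 hcpos)
  have hcl : p.1 = c • l := by
    rw [hl, smul_smul, mul_inv_cancel₀ (ne_of_gt hcpos), one_smul]
  have hσcl : (sigA X A p.1).toReal = c * (sigA X A l).toReal := by
    rw [hcl]; exact sigA_toReal_smul hXne hlσ hcpos
  have hlcirc : IsXCircuit X A b l := by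
    refine ⟨hlN, hl0, hlσ, ?_⟩
    rintro ⟨ν1, ν2, θ, hN1, hN2, hnp, hθ, hdec, haff⟩
    obtain ⟨hσ1, hσ2, htR⟩ := sigAffine_comb hXne hθ haff hdec hlσ
    have hν1 : ν1 ≠ 0 := fun h => hnp ⟨0, Or.inl (by rw [h, zero_smul])⟩
    have hν2 : ν2 ≠ 0 := fun h => hnp ⟨0, Or.inr (by rw [h, zero_smul])⟩
    set q₁ : (Fin m → ℝ) × ℝ := (c • ν1, c * (sigA X A ν1).toReal) with hq₁
    set q₂ : (Fin m → ℝ) × ℝ := (c • ν2, c * (sigA X A ν2).toReal) with hq₂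
    have h1 : q₁ ∈ Kcone X A b := ⟨Nbeta_smul hN1 hcpos.le, fun x hx => by
      simp only [hq₁, dotp_negAmap_smul]
      exact mul_le_mul_of_nonneg_left (dotp_le_sigA_toReal hXne hσ1 hx) hcpos.le⟩
    have h2 : q₂ ∈ Kcone X A b := ⟨Nbeta_smul hN2 hcpos.le, fun x hx => by
      simp only [hq₂, dotp_negAmap_smul]
      exact mul_le_mul_of_nonneg_left (dotp_le_sigA_toReal hXne hσ2 hx) hcpos.le⟩
    have hq10 : q₁ ≠ 0 := by
      intro h
      have : c • ν1 = 0 := congrArg Prod.fst h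
      rcases smul_eq_zero.1 this with h' | h'
      · exact absurd h' (ne_of_gt hcpos)
      · exact hν1 h'
    have hq20 : q₂ ≠ 0 := by
      intro h
      have : c • ν2 = 0 := congrArg Prod.fst h
      rcases smul_eq_zero.1 this with h' | h'
      · exact absurd h' (ne_of_gt hcpos)
      · exact hν2 h'
    have hpq : p = θ • q₁ + (1 - θ) • q₂ := by
      apply Prod.ext
      · show p.1 = (θ • q₁ + (1 - θ) • q₂).1
        simp only [Prod.fst_add, Prod.smul_fst, hq₁, hq₂]
        rw [hcl, hdec, smul_add, smul_comm c θ, smul_comm c (1 - θ)]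
      · show p.2 = (θ • q₁ + (1 - θ) • q₂).2
        simp only [Prod.snd_add, Prod.smul_snd, hq₁, hq₂, smul_eq_mul]
        rw [ht, hσcl, htR]
        ring
    obtain ⟨a₁, a₂, ha₁, ha₂, he₁, he₂⟩ := ext_decomp hx₀ hp h1 h2 hq10 hq20 hθ hpq
    apply hnp
    have hf₁ : c • ν1 = a₁ • p.1 := congrArg Prod.fst he₁
    have hf₂ : c • ν2 = a₂ • p.1 := congrArg Prod.fst he₂
    have hr₁ : ν1 = (c⁻¹ * a₁) • p.1 := by
      rw [mul_smul, ← hf₁, smul_smul, inv_mul_cancel₀ (ne_of_gt hcpos), one_smul]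
    have hr₂ : ν2 = (c⁻¹ * a₂) • p.1 := by
      rw [mul_smul, ← hf₂, smul_smul, inv_mul_cancel₀ (ne_of_gt hcpos), one_smul]
    refine ⟨(c⁻¹ * a₁) * (c⁻¹ * a₂)⁻¹, Or.inl ?_⟩
    rw [hr₁, hr₂, smul_smul]
    congr 1
    field_simp
  have hlmem : l ∈ Lambda X A := Set.mem_iUnion.2 ⟨b, ⟨hlcirc, hlb⟩⟩
  have h0 := hcirc l hlmem
  unfold pairy
  have hsum : ∑ i, y i * p.1 i = c * ∑ i, y i * l i := by
    rw [hcl, Finset.mul_sum]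
    apply Finset.sum_congr rfl
    intro i _
    simp only [Pi.smul_apply, smul_eq_mul]
    ring
  rw [hsum, ht, hσcl, ← mul_add]
  exact mul_nonneg hcpos.le h0

end ExtremeSec
section KdualSec

variable {n m : ℕ} {X : Set (Fin n → ℝ)} {A : Fin m → Fin n → ℝ} {b : Fin m}

lemma Kdual (hXne : X.Nonempty) (y : Fin m → ℝ)
    (hcirc : ∀ l ∈ Lambda X A, 0 ≤ (∑ i, y i * l i) + (sigA X A l).toReal) :
    ∀ p ∈ Kcone X A b, 0 ≤ pairy y p := by
  obtain ⟨x₀, hx₀⟩ := hXne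
  have hXne : X.Nonempty := ⟨x₀, hx₀⟩
  have hKM := closure_convexHull_extremePoints (Bbase_isCompact (A := A) (b := b) hx₀)
    (Bbase_convex (A := A) (b := b) x₀)
  set H : Set ((Fin m → ℝ) × ℝ) := {p | 0 ≤ pairy y p} with hH
  have hHconv : Convex ℝ H := by
    intro p hp q hq a c ha hc _
    simp only [hH, Set.mem_setOf_eq] at hp hq ⊢
    rw [pairy_add, pairy_smul, pairy_smul]
    exact add_nonneg (mul_nonneg ha hp) (mul_nonneg hc hq)
  have hHcl : IsClosed H := isClosed_le continuous_const (pairy_continuous y)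
  have hBH : Bbase X A b x₀ ⊆ H := by
    rw [← hKM]
    apply closure_minimal _ hHcl
    apply convexHull_min _ hHconv
    intro p hp
    exact extreme_nonneg hXne hx₀ y hcirc hp
  intro p hp
  rcases eq_or_ne p 0 with h0 | h0
  · rw [h0, pairy_zero]
  · obtain ⟨hq, hrw⟩ := Bbase_scale hx₀ hp h0
    rw [hrw, pairy_smul]
    exact mul_nonneg (pairy_wfun_pos hx₀ hp h0).le (hBH hq)

end KdualSec
section WsetSec

variable {n m : ℕ} {X : Set (Fin n → ℝ)} {A : Fin m → Fin n → ℝ} {b : Fin m}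

lemma dotp_right_comb (y : Fin n → ℝ) (a c : ℝ) (x x' : Fin n → ℝ) :
    dotp y (a • x + c • x') = a * dotp y x + c * dotp y x' := by
  unfold dotp
  simp only [Pi.add_apply, Pi.smul_apply, smul_eq_mul, mul_add, Finset.sum_add_distrib,
    Finset.mul_sum]
  congr 1 <;> (apply Finset.sum_congr rfl; intros; ring)

/-- The set `W_b = {A x + s·1 + r : x ∈ X, s ∈ ℝ, r_i ≥ 0 (i≠b), r_b ≤ 0}`. -/
def Wset (X : Set (Fin n → ℝ)) (A : Fin m → Fin n → ℝ) (b : Fin m) : Set (Fin m → ℝ) :=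
  {z | ∃ x ∈ X, ∃ s : ℝ, ∃ r : Fin m → ℝ, (∀ i, i ≠ b → 0 ≤ r i) ∧ r b ≤ 0 ∧
    z = fun i => dotp (A i) x + s + r i}

lemma Wset_mem {x : Fin n → ℝ} (hx : x ∈ X) (s : ℝ) {r : Fin m → ℝ}
    (hr : ∀ i, i ≠ b → 0 ≤ r i) (hrb : r b ≤ 0) :
    (fun i => dotp (A i) x + s + r i) ∈ Wset X A b :=
  ⟨x, hx, s, r, hr, hrb, rfl⟩

lemma Wset_convex (hXcv : Convex ℝ X) : Convex ℝ (Wset X A b) := by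
  rintro z ⟨x, hx, s, r, hr, hrb, rfl⟩ z' ⟨x', hx', s', r', hr', hrb', rfl⟩ a c ha hc hac
  refine ⟨a • x + c • x', hXcv hx hx' ha hc hac, a * s + c * s',
    a • r + c • r', ?_, ?_, ?_⟩
  · intro i hi
    exact add_nonneg (mul_nonneg ha (hr i hi)) (mul_nonneg hc (hr' i hi))
  · exact add_nonpos (mul_nonpos_of_nonneg_of_nonpos ha hrb)
      (mul_nonpos_of_nonneg_of_nonpos hc hrb')
  · funext i
    simp only [Pi.add_apply, Pi.smul_apply, smul_eq_mul, dotp_right_comb]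
    ring

lemma y_mem_closure_W (hXne : X.Nonempty) (hXcv : Convex ℝ X) {y : Fin m → ℝ}
    (hKd : ∀ p ∈ Kcone X A b, 0 ≤ pairy y p) : y ∈ closure (Wset X A b) := by
  obtain ⟨x₀, hx₀⟩ := hXne
  by_contra hy
  obtain ⟨f, u, hsep, hyu⟩ := geometric_hahn_banach_closed_point
    ((Wset_convex hXcv).closure) isClosed_closure hy
  have hsepW : ∀ z ∈ Wset X A b, f z < u := fun z hz => hsep z (subset_closure hz)
  set cvec : Fin m → ℝ := fun i => f (fun j => if i = j then 1 else 0) with hcvec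
  have hf : ∀ z : Fin m → ℝ, f z = ∑ i, z i * cvec i := by
    intro z
    conv_lhs => rw [pi_eq_sum_univ z]
    rw [map_sum]
    apply Finset.sum_congr rfl
    intro i _
    rw [map_smul]
    simp [hcvec]
  have hmem : ∀ x ∈ X, ∀ s : ℝ, ∀ r : Fin m → ℝ, (∀ i, i ≠ b → 0 ≤ r i) → r b ≤ 0 →
      (∑ i, (dotp (A i) x + s + r i) * cvec i) < u := by
    intro x hx s r hr hrb
    have := hsepW _ (Wset_mem hx s hr hrb)
    rwa [hf] at this
  set T : ℝ := ∑ i, cvec i with hT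
  set D : ℝ := ∑ i, dotp (A i) x₀ * cvec i with hD
  have hbase : ∀ s : ℝ, ∀ r : Fin m → ℝ, (∀ i, i ≠ b → 0 ≤ r i) → r b ≤ 0 →
      D + s * T + (∑ i, r i * cvec i) < u := by
    intro s r hr hrb
    have h1 := hmem x₀ hx₀ s r hr hrb
    have heq : ∑ i, (dotp (A i) x₀ + s + r i) * cvec i
        = D + s * T + ∑ i, r i * cvec i := by
      simp only [hD, hT, add_mul, Finset.sum_add_distrib, Finset.mul_sum]
    linarith [heq ▸ h1]
  have hT0 : T = 0 := by
    by_contra hT0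
    have h1 := hbase ((u - D) / T) 0 (fun i _ => le_refl 0) (le_refl 0)
    simp only [Pi.zero_apply, zero_mul, Finset.sum_const_zero, add_zero] at h1
    rw [div_mul_cancel₀ _ hT0] at h1
    linarith
  have key : ∀ v : ℝ, (∀ t : ℝ, 0 ≤ t → D + t * v < u) → v ≤ 0 := by
    intro v hv
    by_contra hpos
    push_neg at hpos
    have ht := hv (max 0 ((u - D) / v)) (le_max_left _ _)
    have h2 : (u - D) / v * v ≤ max 0 ((u - D) / v) * v :=
      mul_le_mul_of_nonneg_right (le_max_right _ _) hpos.le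
    rw [div_mul_cancel₀ _ (ne_of_gt hpos)] at h2
    linarith
  have hsign : ∀ i, i ≠ b → cvec i ≤ 0 := by
    intro i hi
    apply key
    intro t ht
    have h1 := hbase 0 (fun j => if j = i then t else 0)
      (fun j _ => by split <;> simp [ht])
      (by rw [if_neg (fun h : b = i => hi h.symm)])
    have h2 : ∑ j, (if j = i then t else 0) * cvec j = t * cvec i := by
      rw [Finset.sum_eq_single i]
      · rw [if_pos rfl]
      · intro j _ hj; rw [if_neg hj, zero_mul]
      · intro h; exact absurd (Finset.mem_univ i) h
    rw [h2] at h1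
    simpa using h1
  have hsb : 0 ≤ cvec b := by
    have := key (-(cvec b)) ?_
    · linarith
    intro t ht
    have h1 := hbase 0 (fun j => if j = b then -t else 0)
      (fun j hj => by simp [if_neg hj]) (by simp [ht])
    have h2 : ∑ j, (if j = b then -t else 0) * cvec j = t * -(cvec b) := by
      rw [Finset.sum_eq_single b]
      · rw [if_pos rfl]; ring
      · intro j _ hj; rw [if_neg hj, zero_mul]
      · intro h; exact absurd (Finset.mem_univ b) h
    rw [h2] at h1
    simpa using h1
  -- build the contradiction via `hKd`
  set ν : Fin m → ℝ := fun i => -(cvec i) with hν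
  have hνN : ν ∈ Nbeta b := by
    constructor
    · intro i hi; simp only [hν]; linarith [hsign i hi]
    · have h6 : ∑ i, ν i = -T := by
        simp only [hν, hT, ← Finset.sum_neg_distrib]
      rw [h6, hT0, neg_zero]
  have hp : (ν, u) ∈ Kcone X A b := by
    refine ⟨hνN, ?_⟩
    intro x hx
    show dotp (-(Amap A ν)) x ≤ u
    rw [dotp_negAmap]
    have h1 := hmem x hx 0 0 (fun i _ => le_refl 0) (le_refl 0)
    simp only [Pi.zero_apply, add_zero] at h1
    have h2 : -∑ i, ν i * dotp (A i) x = ∑ i, dotp (A i) x * cvec i := by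
      simp only [hν, ← Finset.sum_neg_distrib]
      apply Finset.sum_congr rfl
      intros; ring
    rw [h2]
    exact h1.le
  have h3 := hKd _ hp
  unfold pairy at h3
  simp only at h3
  have h4 : ∑ i, y i * ν i = -∑ i, y i * cvec i := by
    simp only [hν, ← Finset.sum_neg_distrib]
    apply Finset.sum_congr rfl
    intros; ring
  have h5 : f y = ∑ i, y i * cvec i := hf y
  rw [h4] at h3
  linarith

end WsetSec
section HardSec

variable {n m : ℕ} {X : Set (Fin n → ℝ)} {A : Fin m → Fin n → ℝ} {b : Fin m}

lemma age_eval_nonneg (hXne : X.Nonempty) (hXcv : Convex ℝ X) {y : Fin m → ℝ}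
    (hKd : ∀ p ∈ Kcone X A b, 0 ≤ pairy y p) {g : Fin m → ℝ} (hg : g ∈ AgeCone X A b) :
    0 ≤ ∑ i, Real.exp (y i) * g i := by
  rcases le_or_gt 0 (g b) with hgb | hgb
  · apply Finset.sum_nonneg
    intro i _
    rcases eq_or_ne i b with h | h
    · exact mul_nonneg (Real.exp_pos _).le (h ▸ hgb)
    · exact mul_nonneg (Real.exp_pos _).le (hg.1 i h)
  · have hyW := y_mem_closure_W hXne hXcv hKd
    set F : (Fin m → ℝ) → ℝ := fun z => ∑ i, Real.exp (z i) * g i with hF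
    have hFcont : Continuous F :=
      continuous_finset_sum _ fun i _ =>
        (Real.continuous_exp.comp (continuous_apply i)).mul continuous_const
    have hFW : ∀ z ∈ Wset X A b, 0 ≤ F z := by
      rintro z ⟨x, hx, s, r, hr, hrb, rfl⟩
      have hterm : ∀ i, Real.exp s * (g i * Real.exp (dotp (A i) x)) ≤
          Real.exp (dotp (A i) x + s + r i) * g i := by
        intro i
        rw [Real.exp_add, Real.exp_add]
        have base : (0:ℝ) ≤ Real.exp (dotp (A i) x) * Real.exp s := by positivity
        rcases eq_or_ne i b with h | h
        · subst h
          have h1 : Real.exp (r i) ≤ 1 := Real.exp_le_one_iff.2 hrb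
          have h3 : 1 * g i ≤ Real.exp (r i) * g i :=
            mul_le_mul_of_nonpos_right h1 hgb.le
          calc Real.exp s * (g i * Real.exp (dotp (A i) x))
              = (Real.exp (dotp (A i) x) * Real.exp s) * (1 * g i) := by ring
            _ ≤ (Real.exp (dotp (A i) x) * Real.exp s) * (Real.exp (r i) * g i) :=
                mul_le_mul_of_nonneg_left h3 base
            _ = Real.exp (dotp (A i) x) * Real.exp s * Real.exp (r i) * g i := by ring
        · have h1 : 1 ≤ Real.exp (r i) := Real.one_le_exp (hr i h)
          have h2 : 0 ≤ g i := hg.1 i h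
          have h3 : 1 * g i ≤ Real.exp (r i) * g i :=
            mul_le_mul_of_nonneg_right h1 h2
          calc Real.exp s * (g i * Real.exp (dotp (A i) x))
              = (Real.exp (dotp (A i) x) * Real.exp s) * (1 * g i) := by ring
            _ ≤ (Real.exp (dotp (A i) x) * Real.exp s) * (Real.exp (r i) * g i) :=
                mul_le_mul_of_nonneg_left h3 base
            _ = Real.exp (dotp (A i) x) * Real.exp s * Real.exp (r i) * g i := by ring
      calc (0:ℝ) ≤ Real.exp s * ∑ i, g i * Real.exp (dotp (A i) x) :=
            mul_nonneg (Real.exp_pos s).le (hg.2 x hx)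
        _ = ∑ i, Real.exp s * (g i * Real.exp (dotp (A i) x)) := by
            rw [Finset.mul_sum]
        _ ≤ ∑ i, Real.exp (dotp (A i) x + s + r i) * g i :=
            Finset.sum_le_sum fun i _ => hterm i
    have hsub : closure (Wset X A b) ⊆ {z | 0 ≤ F z} :=
      closure_minimal hFW (isClosed_le continuous_const hFcont)
    exact hsub hyW

lemma hard_dir (hXne : X.Nonempty) (hXcv : Convex ℝ X) {y : Fin m → ℝ}
    (hy : (y, (1:ℝ)) ∈ dualConeP (circuitGraph X A)) :
    (fun i => Real.exp (y i)) ∈ dualConeV (Sage X A) := by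
  have hcirc : ∀ l ∈ Lambda X A, 0 ≤ (∑ i, y i * l i) + (sigA X A l).toReal := by
    intro l hl
    have hmem : phiVec X A l ∈ circuitGraph X A := by
      refine ⟨1, fun _ => 1, fun _ => phiVec X A l, fun _ => zero_le_one,
        fun _ => Set.mem_union_left _ (Set.mem_image_of_mem _ hl), ?_⟩
      simp
    have := hy _ hmem
    simpa [phiVec] using this
  intro c hc
  obtain ⟨f, hf, rfl⟩ := hc
  have hswap : ∑ i, (fun i => Real.exp (y i)) i * (∑ b', f b') i
      = ∑ b', ∑ i, Real.exp (y i) * f b' i := by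
    rw [Finset.sum_comm]
    apply Finset.sum_congr rfl
    intro i _
    simp only [Finset.sum_apply, Finset.mul_sum]
  rw [hswap]
  apply Finset.sum_nonneg
  intro b' _
  exact age_eval_nonneg hXne hXcv (Kdual hXne y hcirc) (hf b')

end HardSec
section EasySec

variable {n m : ℕ} {X : Set (Fin n → ℝ)} {A : Fin m → Fin n → ℝ} {b : Fin m}

/-- The pairing as a linear map. -/
def pairyL (y : Fin m → ℝ) : ((Fin m → ℝ) × ℝ) →ₗ[ℝ] ℝ where
  toFun := pairy y
  map_add' := pairy_add y
  map_smul' s p := by simp [pairy_smul, smul_eq_mul]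

lemma dualConeV_closed (K : Set (Fin m → ℝ)) : IsClosed (dualConeV K) := by
  have : dualConeV K = ⋂ c ∈ K, {v : Fin m → ℝ | 0 ≤ ∑ i, v i * c i} := by
    ext v; simp [dualConeV, Set.mem_iInter]
  rw [this]
  refine isClosed_biInter fun c _ => isClosed_le continuous_const ?_
  exact continuous_finset_sum _ fun i _ => (continuous_apply i).mul continuous_const

lemma zero_mem_AgeCone (b' : Fin m) : (0 : Fin m → ℝ) ∈ AgeCone X A b' :=
  ⟨fun _ _ => le_refl 0, fun x _ => by simp⟩

lemma single_summand_mem_Sage {c : Fin m → ℝ} (hc : c ∈ AgeCone X A b) :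
    c ∈ Sage X A := by
  refine ⟨fun b' => if b' = b then c else 0, fun b' => ?_, ?_⟩
  · dsimp only
    split
    · next h => subst h; exact hc
    · exact zero_mem_AgeCone b'
  · rw [Finset.sum_ite_eq' Finset.univ b fun _ => c]
    simp

lemma dual_coord_nonneg {v : Fin m → ℝ} (hv : v ∈ dualConeV (Sage X A)) (i : Fin m) :
    0 ≤ v i := by
  have hc : (fun j => if j = i then (1:ℝ) else 0) ∈ AgeCone X A i := by
    refine ⟨fun j hj => by simp [if_neg hj], fun x _ => ?_⟩
    have : ∑ j, (if j = i then (1:ℝ) else 0) * Real.exp (dotp (A j) x)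
        = Real.exp (dotp (A i) x) := by
      rw [Finset.sum_eq_single i]
      · simp
      · intro j _ hj; simp [if_neg hj]
      · intro h; exact absurd (Finset.mem_univ i) h
    rw [this]
    exact (Real.exp_pos _).le
  have := hv _ (single_summand_mem_Sage hc)
  have heq : ∑ j, v j * (if j = i then (1:ℝ) else 0) = v i := by
    rw [Finset.sum_eq_single i]
    · simp
    · intro j _ hj; simp [if_neg hj]
    · intro h; exact absurd (Finset.mem_univ i) h
  rwa [heq] at this

lemma evalvec_mem_dual {x₀ : Fin n → ℝ} (hx₀ : x₀ ∈ X) :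
    (fun i => Real.exp (dotp (A i) x₀)) ∈ dualConeV (Sage X A) := by
  rintro c ⟨f, hf, rfl⟩
  have hswap : ∑ i, (fun i => Real.exp (dotp (A i) x₀)) i * (∑ b', f b') i
      = ∑ b', ∑ i, f b' i * Real.exp (dotp (A i) x₀) := by
    rw [Finset.sum_comm]
    apply Finset.sum_congr rfl
    intro i _
    simp only [Finset.sum_apply, Finset.mul_sum]
    apply Finset.sum_congr rfl
    intros; ring
  rw [hswap]
  exact Finset.sum_nonneg fun b' _ => (hf b').2 x₀ hx₀

/-- Certificate construction: a strictly positive element of the dual SAGE cone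
satisfies all circuit inequalities. -/
lemma pos_dual_circuit_ineq (hXne : X.Nonempty) {w : Fin m → ℝ}
    (hw : w ∈ dualConeV (Sage X A)) (hwpos : ∀ i, 0 < w i) :
    ∀ l ∈ Lambda X A, 0 ≤ (∑ i, Real.log (w i) * l i) + (sigA X A l).toReal := by
  intro l hl
  obtain ⟨b, hb⟩ := Set.mem_iUnion.1 hl
  obtain ⟨⟨hlN, hl0, hlσ, _⟩, hlb⟩ := hb
  set y : Fin m → ℝ := fun i => Real.log (w i) with hy
  set σR : ℝ := (sigA X A l).toReal with hσR
  set E : ℝ := Real.exp (-(∑ i ∈ Finset.univ.erase b, l i * y i) - σR) with hE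
  set c : Fin m → ℝ := fun i => if i = b then -E else l i * (w i)⁻¹ with hc
  have hwexp : ∀ i, w i = Real.exp (y i) := fun i => (Real.exp_log (hwpos i)).symm
  have hsum1 : ∑ i ∈ Finset.univ.erase b, l i = 1 := by
    have h1 := hlN.2
    rw [← Finset.sum_erase_add _ _ (Finset.mem_univ b), hlb] at h1
    linarith
  have hcage : c ∈ AgeCone X A b := by
    constructor
    · intro i hi
      simp only [hc, if_neg hi]
      exact mul_nonneg (hlN.1 i hi) (inv_nonneg.2 (hwpos i).le)
    · intro x hx
      -- Jensen's inequality for exp with weights l on the erased index set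
      have hjen := convexOn_exp.map_sum_le (t := Finset.univ.erase b)
        (w := l) (p := fun i => dotp (A i) x - y i)
        (fun i hi => hlN.1 i (Finset.ne_of_mem_erase hi)) hsum1
        (fun i _ => Set.mem_univ _)
      simp only [smul_eq_mul] at hjen
      -- lower bound for the exponent
      have hdots : -σR ≤ ∑ i, l i * dotp (A i) x := by
        have := dotp_le_sigA_toReal hXne hlσ hx
        rw [dotp_negAmap] at this
        linarith
      have herase : ∑ i ∈ Finset.univ.erase b, l i * dotp (A i) x
          = (∑ i, l i * dotp (A i) x) + dotp (A b) x := by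
        rw [← Finset.sum_erase_add _ (fun i => l i * dotp (A i) x) (Finset.mem_univ b), hlb]
        ring
      have hexpo : dotp (A b) x - σR - ∑ i ∈ Finset.univ.erase b, l i * y i ≤
          ∑ i ∈ Finset.univ.erase b, l i * (dotp (A i) x - y i) := by
        have : ∑ i ∈ Finset.univ.erase b, l i * (dotp (A i) x - y i)
            = (∑ i ∈ Finset.univ.erase b, l i * dotp (A i) x)
              - ∑ i ∈ Finset.univ.erase b, l i * y i := by
          rw [← Finset.sum_sub_distrib]
          apply Finset.sum_congr rfl
          intros; ring
        rw [this, herase]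
        linarith
      have hlow : E * Real.exp (dotp (A b) x) ≤
          Real.exp (∑ i ∈ Finset.univ.erase b, l i * (dotp (A i) x - y i)) := by
        rw [hE, ← Real.exp_add]
        exact Real.exp_le_exp.2 (by linarith)
      have hterm : ∀ i ∈ Finset.univ.erase b,
          l i * Real.exp (dotp (A i) x - y i) = c i * Real.exp (dotp (A i) x) := by
        intro i hi
        have hib := Finset.ne_of_mem_erase hi
        simp only [hc, if_neg hib, hwexp i, ← Real.exp_neg, Real.exp_sub]
        rw [Real.exp_neg]
        ring
      have hsplit : ∑ i, c i * Real.exp (dotp (A i) x)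
          = (∑ i ∈ Finset.univ.erase b, c i * Real.exp (dotp (A i) x))
            + (-E) * Real.exp (dotp (A b) x) := by
        rw [← Finset.sum_erase_add _ _ (Finset.mem_univ b)]
        simp only [hc, if_pos rfl]
      rw [hsplit, ← Finset.sum_congr rfl hterm]
      have := le_trans hlow hjen
      linarith
  have hpair := hw _ (single_summand_mem_Sage hcage)
  have hpairval : ∑ i, w i * c i = 1 - w b * E := by
    rw [← Finset.sum_erase_add _ _ (Finset.mem_univ b)]
    have h1 : ∑ i ∈ Finset.univ.erase b, w i * c i = ∑ i ∈ Finset.univ.erase b, l i := by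
      apply Finset.sum_congr rfl
      intro i hi
      have hib := Finset.ne_of_mem_erase hi
      simp only [hc, if_neg hib]
      rw [mul_comm (l i) ((w i)⁻¹), ← mul_assoc, mul_inv_cancel₀ (ne_of_gt (hwpos i)), one_mul]
    rw [h1, hsum1]
    simp only [hc, if_pos rfl]
    ring
  rw [hpairval] at hpair
  have hEle : Real.exp (y b + (-(∑ i ∈ Finset.univ.erase b, l i * y i) - σR)) ≤ 1 := by
    rw [Real.exp_add, ← hwexp b]
    linarith
  have hexple := Real.exp_le_one_iff.1 hEle
  have hysum : ∑ i, y i * l i = (∑ i ∈ Finset.univ.erase b, l i * y i) - y b := by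
    rw [← Finset.sum_erase_add _ (fun i => y i * l i) (Finset.mem_univ b), hlb]
    have : ∑ i ∈ Finset.univ.erase b, y i * l i
        = ∑ i ∈ Finset.univ.erase b, l i * y i := by
      apply Finset.sum_congr rfl; intros; ring
    rw [this]; ring
  rw [hysum]
  linarith

end EasySec
section FinalSec

variable {n m : ℕ} {X : Set (Fin n → ℝ)} {A : Fin m → Fin n → ℝ}

lemma feasible_of_circuit_ineq {y : Fin m → ℝ}
    (hkey : ∀ l ∈ Lambda X A, 0 ≤ (∑ i, y i * l i) + (sigA X A l).toReal) :
    (y, (1:ℝ)) ∈ dualConeP (circuitGraph X A) := by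
  rintro q ⟨k, t, v, htn, hvS, rfl⟩
  show 0 ≤ (∑ i, y i * (∑ j, t j • v j).1 i) + 1 * (∑ j, t j • v j).2
  rw [one_mul]
  have : (∑ i, y i * (∑ j, t j • v j).1 i) + (∑ j, t j • v j).2
      = pairy y (∑ j, t j • v j) := rfl
  rw [this, show pairy y (∑ j, t j • v j) = pairyL y (∑ j, t j • v j) from rfl,
    map_sum]
  apply Finset.sum_nonneg
  intro j _
  have : pairyL y (t j • v j) = t j * pairy y (v j) := by
    show pairy y (t j • v j) = t j * pairy y (v j)
    exact pairy_smul y (t j) (v j)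
  rw [this]
  apply mul_nonneg (htn j)
  rcases hvS j with h | h
  · obtain ⟨l, hl, hr⟩ := h
    rw [← hr]
    have := hkey l hl
    unfold pairy phiVec
    simpa using this
  · rw [h]
    show 0 ≤ pairy y ((0 : Fin m → ℝ), (1:ℝ))
    unfold pairy
    simp

end FinalSec

theorem statement8 {n m : ℕ} (X : Set (Fin n → ℝ)) (hXne : X.Nonempty) (hXcl : IsClosed X)
    (hXcv : Convex ℝ X) (A : Fin m → Fin n → ℝ) (hA : Function.Injective A) (hm : 0 < m) :
    dualConeV (Sage X A) =
      closure {v : Fin m → ℝ | ∃ y : Fin m → ℝ,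
        (y, (1:ℝ)) ∈ dualConeP (circuitGraph X A) ∧ v = fun i => Real.exp (y i)} := by
  apply Set.Subset.antisymm
  · -- dual ⊆ closure
    intro v hv
    obtain ⟨x₀, hx₀⟩ := hXne
    have hXne : X.Nonempty := ⟨x₀, hx₀⟩
    set u : Fin m → ℝ := fun i => Real.exp (dotp (A i) x₀) with hu
    have hud := evalvec_mem_dual (A := A) hx₀
    have htend : Filter.Tendsto (fun k : ℕ => v + (1/((k:ℝ)+1)) • u)
        Filter.atTop (nhds v) := by
      rw [tendsto_pi_nhds]
      intro i
      have h1 : Filter.Tendsto (fun k : ℕ => 1/((k:ℝ)+1)) Filter.atTop (nhds 0) :=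
        tendsto_one_div_add_atTop_nhds_zero_nat
      have h2 := (h1.mul_const (u i)).const_add (v i)
      simp only [Pi.add_apply, Pi.smul_apply, smul_eq_mul]
      simpa using h2
    apply mem_closure_of_tendsto htend
    apply Filter.Eventually.of_forall
    intro k
    set e : ℝ := 1/((k:ℝ)+1) with he
    have hepos : 0 < e := by positivity
    set w : Fin m → ℝ := v + e • u with hw
    have hwd : w ∈ dualConeV (Sage X A) := by
      intro c hc
      have : ∑ i, w i * c i = (∑ i, v i * c i) + e * ∑ i, u i * c i := by
        simp only [hw, Pi.add_apply, Pi.smul_apply, smul_eq_mul, add_mul,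
          Finset.sum_add_distrib, Finset.mul_sum]
        congr 1
        apply Finset.sum_congr rfl
        intros; ring
      rw [this]
      exact add_nonneg (hv c hc) (mul_nonneg hepos.le (hud c hc))
    have hwpos : ∀ i, 0 < w i := by
      intro i
      have h1 : 0 ≤ v i := dual_coord_nonneg hv i
      have h2 : 0 < e * u i := mul_pos hepos (Real.exp_pos _)
      simp only [hw, Pi.add_apply, Pi.smul_apply, smul_eq_mul]
      linarith
    exact ⟨fun i => Real.log (w i),
      feasible_of_circuit_ineq (pos_dual_circuit_ineq hXne hwd hwpos),
      funext fun i => (Real.exp_log (hwpos i)).symm⟩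
  · -- closure ⊆ dual
    apply closure_minimal _ (dualConeV_closed (Sage X A))
    rintro v ⟨y, hy, rfl⟩
    exact hard_dir hXne hXcv hy
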